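/- arXiv:1806.10482 — 3 statements merged into one kernel-verified Lean document; each statement's English description precedes it below -/
import Mathlib

section
/- The following are equivalent: (i) L′ = Im(D) + V, that is, every f ∈ L′ can be written as f = D𝐯 + μ with 𝐯 ∈ 𝐖_D and μ ∈ V; (ii) the seminorm ‖·‖_{W_G} and the graph norm ‖·‖_{W_G,𝒢} are equivalent norms on W_G, i.e. there exists C > 0 such that ‖u‖_{W_G,𝒢} ≤ C ‖u‖_{W_G} for all u ∈ W_G. -/
open NormedSpace Filter Topology

noncomputable section

variable {L Lv : Type*} [NormedAddCommGroup L] [NormedSpace ℝ L]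
  [NormedAddCommGroup Lv] [NormedSpace ℝ Lv]

/-- The seminorm `|u|_{L,V} = sup_{μ ∈ V \ {0}} |⟨μ,u⟩| / ‖μ‖` (equal to `0` when `V = {0}`,
since `sSup ∅ = 0` in `ℝ`). -/
noncomputable def semV (V : Submodule ℝ (StrongDual ℝ L)) (u : L) : ℝ :=
  sSup ((fun μ : StrongDual ℝ L => |μ u| / ‖μ‖) '' {μ : StrongDual ℝ L | μ ∈ V ∧ μ ≠ 0})

/-- `IsWDpair W_G G φ w` says that `φ ∈ 𝐖_D` with `D φ = w`, i.e. the abstract Stokes formula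
`⟨φ, G u⟩ + ⟨w, u⟩ = 0` holds for all `u ∈ W_G`. -/
def IsWDpair (WG : Submodule ℝ L) (G : ↥WG →ₗ[ℝ] Lv) (φ : StrongDual ℝ Lv) (w : StrongDual ℝ L) : Prop :=
  ∀ u : ↥WG, φ (G u) + w (u : L) = 0

/-- A gradient discretisation `𝒟 = (X_𝒟, P_𝒟, G_𝒟)`: a finite-dimensional real vector space
`X`, a function reconstruction `P : X → L` and a gradient reconstruction `Gd : X → Lv`, such
that `v ↦ (|P v|_{L,V}^p + ‖Gd v‖^p)^{1/p}` is a norm on `X` (definiteness is the only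
non-automatic condition). -/
structure GradDisc (L Lv : Type*) [NormedAddCommGroup L] [NormedSpace ℝ L]
    [NormedAddCommGroup Lv] [NormedSpace ℝ Lv]
    (V : Submodule ℝ (StrongDual ℝ L)) (p : ℝ) where
  X : Type
  [instAddCommGroup : AddCommGroup X]
  [instModule : Module ℝ X]
  [instFin : FiniteDimensional ℝ X]
  P : X →ₗ[ℝ] L
  Gd : X →ₗ[ℝ] Lv
  dnorm_definite : ∀ v : X, (semV V (P v) ^ p + ‖Gd v‖ ^ p) ^ (1 / p) = 0 → v = 0

attribute [instance] GradDisc.instAddCommGroup GradDisc.instModule GradDisc.instFin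

namespace GradDisc

variable {V : Submodule ℝ (StrongDual ℝ L)} {p : ℝ}

/-- The discrete norm `‖v‖_𝒟 = (|P_𝒟 v|_{L,V}^p + ‖G_𝒟 v‖_Lv^p)^{1/p}`. -/
noncomputable def dnorm (D : GradDisc L Lv V p) (v : D.X) : ℝ :=
  (semV V (D.P v) ^ p + ‖D.Gd v‖ ^ p) ^ (1 / p)

/-- `C_𝒟 = max_{v ≠ 0} ‖P_𝒟 v‖_L / ‖v‖_𝒟`. -/
noncomputable def CD (D : GradDisc L Lv V p) : ℝ :=
  sSup ((fun v : D.X => ‖D.P v‖ / D.dnorm v) '' {v : D.X | v ≠ 0})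

/-- `W_𝒟(φ) = sup_{u ≠ 0} |⟨φ, G_𝒟 u⟩ + ⟨D φ, P_𝒟 u⟩| / ‖u‖_𝒟`, where `w = D φ`. -/
noncomputable def WDdef (D : GradDisc L Lv V p) (φ : StrongDual ℝ Lv) (w : StrongDual ℝ L) : ℝ :=
  sSup ((fun u : D.X => |φ (D.Gd u) + w (D.P u)| / D.dnorm u) '' {u : D.X | u ≠ 0})

/-- `S_𝒟(φ) = min_v (‖P_𝒟 v − φ‖_L + ‖G_𝒟 v − G φ‖_Lv)`, where `gφ = G φ`. -/
noncomputable def SDdef (D : GradDisc L Lv V p) (φ : L) (gφ : Lv) : ℝ :=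
  sInf (Set.range fun v : D.X => ‖D.P v - φ‖ + ‖D.Gd v - gφ‖)

end GradDisc

/-- Coercivity of a sequence of gradient discretisations: `sup_m C_{𝒟_m} < ∞`. -/
def Coercive {V : Submodule ℝ (StrongDual ℝ L)} {p : ℝ} (D : ℕ → GradDisc L Lv V p) : Prop :=
  ∃ C : ℝ, ∀ m : ℕ, (D m).CD ≤ C

/-- Limit-conformity: `W_{𝒟_m}(φ) → 0` for every `φ ∈ 𝐖_D` (with `w = D φ`). -/
def LimitConforming (WG : Submodule ℝ L) (G : ↥WG →ₗ[ℝ] Lv)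
    {V : Submodule ℝ (StrongDual ℝ L)} {p : ℝ} (D : ℕ → GradDisc L Lv V p) : Prop :=
  ∀ (φ : StrongDual ℝ Lv) (w : StrongDual ℝ L), IsWDpair WG G φ w →
    Filter.Tendsto (fun m => (D m).WDdef φ w) Filter.atTop (𝓝 0)

/-- Consistency: `S_{𝒟_m}(φ) → 0` for every `φ ∈ W_G`. -/
def Consistent (WG : Submodule ℝ L) (G : ↥WG →ₗ[ℝ] Lv)
    {V : Submodule ℝ (StrongDual ℝ L)} {p : ℝ} (D : ℕ → GradDisc L Lv V p) : Prop :=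
  ∀ u : ↥WG, Filter.Tendsto (fun m => (D m).SDdef (u : L) (G u)) Filter.atTop (𝓝 0)

/-- Compactness: bounded discrete sequences have relatively compact reconstructions in `L`. -/
def CompactSeq {V : Submodule ℝ (StrongDual ℝ L)} {p : ℝ} (D : ℕ → GradDisc L Lv V p) : Prop :=
  ∀ u : (m : ℕ) → (D m).X, (∃ C : ℝ, ∀ m : ℕ, (D m).dnorm (u m) ≤ C) →
    IsCompact (closure (Set.range fun m => (D m).P (u m)))


lemma semV_nonneg (V : Submodule ℝ (StrongDual ℝ L)) (u : L) : 0 ≤ semV V u :=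
  Real.sSup_nonneg (by rintro x ⟨μ, ⟨hμ, hμ0⟩, rfl⟩; positivity)

lemma semV_le {V : Submodule ℝ (StrongDual ℝ L)} {u : L} {a : ℝ} (ha : 0 ≤ a)
    (h : ∀ μ : StrongDual ℝ L, μ ∈ V → |μ u| ≤ a * ‖μ‖) : semV V u ≤ a := by
  refine Real.sSup_le ?_ ha
  rintro x ⟨μ, ⟨hμ, hμ0⟩, rfl⟩
  rw [div_le_iff₀ (norm_pos_iff.mpr hμ0)]
  exact h μ hμ

lemma abs_le_semV {V : Submodule ℝ (StrongDual ℝ L)} {u : L} {μ : StrongDual ℝ L} (hμ : μ ∈ V) :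
    |μ u| ≤ ‖μ‖ * semV V u := by
  rcases eq_or_ne μ 0 with rfl | hμ0
  · simp
  · have hb : BddAbove ((fun ν : StrongDual ℝ L => |ν u| / ‖ν‖) '' {ν : StrongDual ℝ L | ν ∈ V ∧ ν ≠ 0}) := by
      refine ⟨‖u‖, ?_⟩
      rintro x ⟨ν, ⟨hν, hν0⟩, rfl⟩
      rw [div_le_iff₀ (norm_pos_iff.mpr hν0)]
      calc |ν u| = ‖ν u‖ := (Real.norm_eq_abs _).symm
        _ ≤ ‖ν‖ * ‖u‖ := ν.le_opNorm u
        _ = ‖u‖ * ‖ν‖ := mul_comm _ _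
    have hmem := le_csSup hb (Set.mem_image_of_mem _ (⟨hμ, hμ0⟩ :
      μ ∈ {ν : StrongDual ℝ L | ν ∈ V ∧ ν ≠ 0}))
    rw [div_le_iff₀ (norm_pos_iff.mpr hμ0)] at hmem
    calc |μ u| ≤ semV V u * ‖μ‖ := hmem
      _ = ‖μ‖ * semV V u := mul_comm _ _

lemma rpow_p_inv {x p : ℝ} (hx : 0 ≤ x) (hp : 0 < p) : (x ^ p) ^ (1/p) = x := by
  rw [← Real.rpow_mul hx, mul_one_div_cancel hp.ne', Real.rpow_one]

lemma le_rpow_add_left {p x y : ℝ} (hp : 0 < p) (hx : 0 ≤ x) (hy : 0 ≤ y) :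
    x ≤ (x ^ p + y ^ p) ^ (1/p) := by
  calc x = (x ^ p) ^ (1/p) := (rpow_p_inv hx hp).symm
    _ ≤ (x ^ p + y ^ p) ^ (1/p) :=
      Real.rpow_le_rpow (Real.rpow_nonneg hx p)
        (le_add_of_nonneg_right (Real.rpow_nonneg hy p)) (by positivity)

lemma le_rpow_add_right {p x y : ℝ} (hp : 0 < p) (hx : 0 ≤ x) (hy : 0 ≤ y) :
    y ≤ (x ^ p + y ^ p) ^ (1/p) := by
  calc y = (y ^ p) ^ (1/p) := (rpow_p_inv hy hp).symm
    _ ≤ (x ^ p + y ^ p) ^ (1/p) :=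
      Real.rpow_le_rpow (Real.rpow_nonneg hy p)
        (le_add_of_nonneg_left (Real.rpow_nonneg hx p)) (by positivity)


lemma fwd_aux
    (WG : Submodule ℝ L) (G : ↥WG →ₗ[ℝ] Lv)
    (p : ℝ) (hp : 1 < p)
    (V : Submodule ℝ (StrongDual ℝ L))
    (H : ∀ f : StrongDual ℝ L, ∃ (φ : StrongDual ℝ Lv) (w μ : StrongDual ℝ L),
      IsWDpair WG G φ w ∧ μ ∈ V ∧ f = w + μ) :
    (∃ C : ℝ, 0 < C ∧ ∀ u : ↥WG,
      (‖(u : L)‖ ^ p + ‖G u‖ ^ p) ^ (1 / p) ≤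
        C * (semV V (u : L) ^ p + ‖G u‖ ^ p) ^ (1 / p)) := by
  have hp0 : (0:ℝ) < p := one_pos.trans hp
  set N : ↥WG → ℝ := fun u => (semV V (u:L) ^ p + ‖G u‖ ^ p) ^ (1/p) with hNdef
  have hN0 : ∀ u, 0 ≤ N u := fun u => Real.rpow_nonneg
    (add_nonneg (Real.rpow_nonneg (semV_nonneg V _) p) (Real.rpow_nonneg (norm_nonneg _) p)) _
  have hsemN : ∀ u : ↥WG, semV V (u:L) ≤ N u :=
    fun u => le_rpow_add_left hp0 (semV_nonneg V _) (norm_nonneg _)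
  have hGN : ∀ u : ↥WG, ‖G u‖ ≤ N u :=
    fun u => le_rpow_add_right hp0 (semV_nonneg V _) (norm_nonneg _)
  -- per-functional bound
  have hIf : ∀ f : StrongDual ℝ L, ∃ Cf : ℝ, ∀ u : ↥WG, |f (u:L)| ≤ Cf * N u := by
    intro f
    obtain ⟨φ, w, μ, hWD, hμ, hf⟩ := H f
    refine ⟨‖φ‖ + ‖μ‖, fun u => ?_⟩
    have hw : w (u:L) = -(φ (G u)) := by have := hWD u; linarith
    have h1 : |f (u:L)| ≤ ‖φ‖ * ‖G u‖ + ‖μ‖ * semV V (u:L) := by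
      rw [hf, ContinuousLinearMap.add_apply, hw]
      calc |-(φ (G u)) + μ (u:L)| ≤ |(-(φ (G u)))| + |μ (u:L)| := abs_add_le _ _
        _ ≤ ‖φ‖ * ‖G u‖ + ‖μ‖ * semV V (u:L) := by
            rw [abs_neg]
            gcongr
            · calc |φ (G u)| = ‖φ (G u)‖ := (Real.norm_eq_abs _).symm
                _ ≤ ‖φ‖ * ‖G u‖ := φ.le_opNorm _
            · exact abs_le_semV hμ
    calc |f (u:L)| ≤ ‖φ‖ * ‖G u‖ + ‖μ‖ * semV V (u:L) := h1
      _ ≤ ‖φ‖ * N u + ‖μ‖ * N u := by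
          gcongr
          · exact hGN u
          · exact hsemN u
      _ = (‖φ‖ + ‖μ‖) * N u := by ring
  -- Banach–Steinhaus
  set gfam : {u : ↥WG // N u ≠ 0} → (StrongDual ℝ L) →L[ℝ] ℝ :=
    fun i => (N i.1)⁻¹ • (inclusionInDoubleDual ℝ L ((i.1 : ↥WG) : L)) with hgfam
  have hpt : ∀ f : StrongDual ℝ L, ∃ C : ℝ, ∀ i, ‖gfam i f‖ ≤ C := by
    intro f
    obtain ⟨Cf, hCf⟩ := hIf f
    refine ⟨Cf, fun i => ?_⟩
    have hNpos : 0 < N i.1 := lt_of_le_of_ne (hN0 i.1) (Ne.symm i.2)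
    have : ‖gfam i f‖ = (N i.1)⁻¹ * |f ((i.1 : ↥WG) : L)| := by
      simp [hgfam, norm_smul, abs_of_pos hNpos, Real.norm_eq_abs, dual_def]
    rw [this, inv_mul_le_iff₀ hNpos]
    calc |f ((i.1 : ↥WG) : L)| ≤ Cf * N i.1 := hCf i.1
      _ = N i.1 * Cf := mul_comm _ _
  obtain ⟨C', hC'⟩ := banach_steinhaus hpt
  -- pointwise norm bound
  set K : ℝ := max C' 0 + 1 with hK
  have hK1 : (1:ℝ) ≤ K := by have := le_max_right C' 0; simp only [hK]; linarith
  have hKpos : (0:ℝ) < K := lt_of_lt_of_le one_pos hK1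
  have hb : ∀ u : ↥WG, ‖(u:L)‖ ≤ K * N u := by
    intro u
    rcases eq_or_ne (N u) 0 with h0 | h0
    · rw [h0, mul_zero]
      refine norm_le_dual_bound ℝ _ le_rfl ?_
      intro f
      obtain ⟨Cf, hCf⟩ := hIf f
      have := hCf u
      rw [h0, mul_zero] at this
      rw [Real.norm_eq_abs]
      calc |f (u:L)| ≤ 0 := this
        _ ≤ 0 * ‖f‖ := by simp
    · have hNpos : 0 < N u := lt_of_le_of_ne (hN0 u) (Ne.symm h0)
      have hd : ∀ f : StrongDual ℝ L, ‖f (u:L)‖ ≤ (K * N u) * ‖f‖ := by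
        intro f
        have h2 := (gfam ⟨u, h0⟩).le_opNorm f
        have h3 : ‖gfam ⟨u, h0⟩‖ ≤ C' := hC' ⟨u, h0⟩
        have h4 : ‖gfam ⟨u, h0⟩ f‖ = (N u)⁻¹ * |f (u:L)| := by
          simp [hgfam, norm_smul, abs_of_pos hNpos, Real.norm_eq_abs, dual_def]
        have h5 : (N u)⁻¹ * |f (u:L)| ≤ C' * ‖f‖ := by
          rw [← h4]
          exact h2.trans (by gcongr)
        have h6 : |f (u:L)| ≤ N u * (C' * ‖f‖) := by
          rw [← inv_mul_le_iff₀ hNpos]; exact h5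
        rw [Real.norm_eq_abs]
        calc |f (u:L)| ≤ N u * (C' * ‖f‖) := h6
          _ ≤ N u * (K * ‖f‖) := by
              have hCK : C' ≤ K := by
                have := le_max_left C' 0
                simp only [hK]; linarith
              gcongr
          _ = (K * N u) * ‖f‖ := by ring
      exact norm_le_dual_bound ℝ _ (by positivity) hd
  refine ⟨2 * K, by positivity, fun u => ?_⟩
  have h1 : ‖(u:L)‖ ≤ K * N u := hb u
  have h2 : ‖G u‖ ≤ K * N u := by
    calc ‖G u‖ ≤ N u := hGN u
      _ = 1 * N u := (one_mul _).symm
      _ ≤ K * N u := by gcongr; exact hN0 u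
  have hsum : ‖(u:L)‖ ^ p + ‖G u‖ ^ p ≤ 2 * (K * N u) ^ p := by
    have e1 : ‖(u:L)‖ ^ p ≤ (K * N u) ^ p :=
      Real.rpow_le_rpow (norm_nonneg _) h1 hp0.le
    have e2 : ‖G u‖ ^ p ≤ (K * N u) ^ p :=
      Real.rpow_le_rpow (norm_nonneg _) h2 hp0.le
    linarith
  have hKN0 : 0 ≤ K * N u := mul_nonneg hKpos.le (hN0 u)
  calc (‖(u:L)‖ ^ p + ‖G u‖ ^ p) ^ (1/p)
      ≤ (2 * (K * N u) ^ p) ^ (1/p) :=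
        Real.rpow_le_rpow (add_nonneg (Real.rpow_nonneg (norm_nonneg _) p)
          (Real.rpow_nonneg (norm_nonneg _) p)) hsum (by positivity)
    _ = 2 ^ (1/p) * (K * N u) := by
        rw [Real.mul_rpow (by norm_num) (Real.rpow_nonneg hKN0 p), rpow_p_inv hKN0 hp0]
    _ ≤ 2 * (K * N u) := by
        have h12 : (2:ℝ) ^ (1/p) ≤ 2 ^ (1:ℝ) :=
          Real.rpow_le_rpow_of_exponent_le one_le_two ((div_le_one hp0).mpr hp.le)
        rw [Real.rpow_one] at h12
        gcongr
    _ = 2 * K * N u := by ring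


noncomputable instance instNACGStrongDualSub (V : Submodule ℝ (StrongDual ℝ L)) :
    NormedAddCommGroup (StrongDual ℝ ↥V) :=
  @ContinuousLinearMap.toNormedAddCommGroup ℝ ℝ ↥V ℝ _ _ _ _ _ _ (RingHom.id ℝ) _

noncomputable instance instNSStrongDualSub (V : Submodule ℝ (StrongDual ℝ L)) :
    NormedSpace ℝ (StrongDual ℝ ↥V) :=
  @ContinuousLinearMap.toNormedSpace ℝ ℝ ↥V ℝ _ _ _ _ _ _ (RingHom.id ℝ) _ ℝ _ _ _

set_option maxHeartbeats 2000000 in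
lemma bwd_aux
    (hreflL : Function.Surjective ⇑(inclusionInDoubleDual ℝ L))
    (WG : Submodule ℝ L) (G : ↥WG →ₗ[ℝ] Lv)
    (p : ℝ) (hp : 1 < p)
    (V : Submodule ℝ (StrongDual ℝ L)) (hVclosed : IsClosed (V : Set (StrongDual ℝ L)))
    (C : ℝ) (hC : 0 < C)
    (hineq : ∀ u : ↥WG,
      (‖(u : L)‖ ^ p + ‖G u‖ ^ p) ^ (1 / p) ≤
        C * (semV V (u : L) ^ p + ‖G u‖ ^ p) ^ (1 / p)) :
    ∀ f : StrongDual ℝ L, ∃ (φ : StrongDual ℝ Lv) (w μ : StrongDual ℝ L),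
      IsWDpair WG G φ w ∧ μ ∈ V ∧ f = w + μ := by
  intro f
  have hp0 : (0:ℝ) < p := one_pos.trans hp
  -- the evaluation map ι : L →ₗ StrongDual ℝ ↥V
  set ι : L →ₗ[ℝ] StrongDual ℝ ↥V :=
    { toFun := fun x => ((inclusionInDoubleDual ℝ L) x).comp V.subtypeL
      map_add' := by
        intro x y; ext ν
        simp [dual_def]
      map_smul' := by
        intro c x; ext ν
        simp [dual_def] } with hι
  have hιapp : ∀ (x : L) (ν : ↥V), ι x ν = (ν : StrongDual ℝ L) x := by
    intro x ν; simp [hι, dual_def]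
  -- semV is dominated by ‖ι x‖
  have hsem_le : ∀ x : L, semV V x ≤ ‖ι x‖ := by
    intro x
    refine semV_le (norm_nonneg _) ?_
    intro μ hμ
    have h1 := ContinuousLinearMap.le_opNorm (σ₁₂ := RingHom.id ℝ) (E := ↥V) (F := ℝ) (ι x) (⟨μ, hμ⟩ : ↥V)
    rw [hιapp] at h1
    simpa [Real.norm_eq_abs] using h1
  have hι_zero : ∀ x : L, ι x = 0 → semV V x = 0 := by
    intro x hx
    refine le_antisymm (semV_le le_rfl ?_) (semV_nonneg V x)
    intro μ hμ
    have : (⟨μ, hμ⟩ : ↥V) ∈ (Set.univ : Set ↥V) := trivial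
    have h0 : ι x ⟨μ, hμ⟩ = 0 := by rw [hx]; rfl
    rw [hιapp] at h0
    simp [h0]
  -- the combined map J
  set J : ↥WG →ₗ[ℝ] Lv × StrongDual ℝ ↥V := LinearMap.prod G (ι.comp WG.subtype) with hJ
  have hJapp : ∀ u : ↥WG, J u = (G u, ι (u:L)) := fun u => rfl
  -- the seminorm is controlled by ‖J u‖
  have hN_le : ∀ u : ↥WG,
      (semV V (u:L) ^ p + ‖G u‖ ^ p) ^ (1/p) ≤ 2 * ‖J u‖ := by
    intro u
    have hJn : ‖J u‖ = max ‖G u‖ ‖ι (u:L)‖ := by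
      rw [hJapp, Prod.norm_def]
    have hM0 : 0 ≤ ‖J u‖ := norm_nonneg _
    have hGM : ‖G u‖ ≤ ‖J u‖ := by rw [hJn]; exact le_max_left _ _
    have hsM : semV V (u:L) ≤ ‖J u‖ := by
      refine (hsem_le _).trans ?_
      rw [hJn]; exact le_max_right _ _
    have hsum : semV V (u:L) ^ p + ‖G u‖ ^ p ≤ 2 * ‖J u‖ ^ p := by
      have e1 := Real.rpow_le_rpow (semV_nonneg V _) hsM hp0.le
      have e2 := Real.rpow_le_rpow (norm_nonneg _) hGM hp0.le
      linarith
    calc (semV V (u:L) ^ p + ‖G u‖ ^ p) ^ (1/p)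
        ≤ (2 * ‖J u‖ ^ p) ^ (1/p) :=
          Real.rpow_le_rpow (add_nonneg (Real.rpow_nonneg (semV_nonneg V _) p)
            (Real.rpow_nonneg (norm_nonneg _) p)) hsum (by positivity)
      _ = 2 ^ (1/p) * ‖J u‖ := by
          rw [Real.mul_rpow (by norm_num) (Real.rpow_nonneg hM0 p), rpow_p_inv hM0 hp0]
      _ ≤ 2 * ‖J u‖ := by
          have h12 : (2:ℝ) ^ (1/p) ≤ 2 ^ (1:ℝ) :=
            Real.rpow_le_rpow_of_exponent_le one_le_two ((div_le_one hp0).mpr hp.le)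
          rw [Real.rpow_one] at h12
          gcongr
  -- J is injective
  have hinj : Function.Injective J := by
    intro u v huv
    have h0 : J (u - v) = 0 := by rw [map_sub, huv, sub_self]
    have hG0 : G (u - v) = 0 := congrArg Prod.fst h0
    have hι0 : ι ((u - v : ↥WG) : L) = 0 := congrArg Prod.snd h0
    have hs0 : semV V ((u - v : ↥WG) : L) = 0 := hι_zero _ hι0
    have hi := hineq (u - v)
    rw [hG0, hs0] at hi
    simp only [norm_zero, Real.zero_rpow hp0.ne', add_zero, zero_add,
      Real.zero_rpow (one_div_ne_zero hp0.ne'), mul_zero] at hi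
    rw [rpow_p_inv (norm_nonneg _) hp0] at hi
    have h00 : ((u - v : ↥WG) : L) = 0 := norm_le_zero_iff.mp hi
    have huv0 : u - v = 0 := by exact_mod_cast h00
    exact sub_eq_zero.mp huv0
  -- bounded functional on range J
  set E := LinearEquiv.ofInjective J hinj with hE
  set F₀ : ↥(LinearMap.range J) →ₗ[ℝ] ℝ :=
    (f.toLinearMap.comp WG.subtype).comp E.symm.toLinearMap with hF₀
  have hF₀app : ∀ u : ↥WG, F₀ ⟨J u, LinearMap.mem_range_self J u⟩ = f (u : L) := by
    intro u
    have h1 : (⟨J u, LinearMap.mem_range_self J u⟩ : ↥(LinearMap.range J)) = E u :=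
      Subtype.ext (LinearEquiv.ofInjective_apply J u).symm
    rw [h1]
    simp [hF₀]
  set K := ‖f‖ * (C * 2) with hKdef
  have hbound : ∀ y : ↥(LinearMap.range J), ‖F₀ y‖ ≤ K * ‖y‖ := by
    intro y
    obtain ⟨u, hu⟩ := y.2
    have hy : y = ⟨J u, LinearMap.mem_range_self J u⟩ := Subtype.ext hu.symm
    rw [hy, hF₀app]
    have hyn : ‖(⟨J u, LinearMap.mem_range_self J u⟩ : ↥(LinearMap.range J))‖ = ‖J u‖ := rfl
    rw [hyn]
    calc ‖f (u:L)‖ ≤ ‖f‖ * ‖(u:L)‖ := f.le_opNorm _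
      _ ≤ ‖f‖ * ((‖(u:L)‖ ^ p + ‖G u‖ ^ p) ^ (1/p)) := by
          gcongr
          exact le_rpow_add_left hp0 (norm_nonneg _) (norm_nonneg _)
      _ ≤ ‖f‖ * (C * ((semV V (u:L) ^ p + ‖G u‖ ^ p) ^ (1/p))) := by
          gcongr
          exact hineq u
      _ ≤ ‖f‖ * (C * (2 * ‖J u‖)) := by
          gcongr
          exact hN_le u
      _ = K * ‖J u‖ := by rw [hKdef]; ring
  set F := LinearMap.mkContinuous F₀ K hbound with hF
  obtain ⟨g, hg, -⟩ := exists_extension_norm_eq (LinearMap.range J) F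
  set φ₀ : StrongDual ℝ Lv := g.comp (ContinuousLinearMap.inl ℝ Lv (StrongDual ℝ ↥V)) with hφ₀
  set Ψ : StrongDual ℝ (StrongDual ℝ ↥V) := g.comp (ContinuousLinearMap.inr ℝ Lv (StrongDual ℝ ↥V)) with hΨ
  have hιb : ∀ x : L, ‖ι x‖ ≤ 1 * ‖x‖ := by
    intro x
    rw [one_mul]
    refine ContinuousLinearMap.opNorm_le_bound _ (norm_nonneg x) ?_
    intro ν
    rw [hιapp]
    calc ‖(ν : StrongDual ℝ L) x‖ ≤ ‖(ν : StrongDual ℝ L)‖ * ‖x‖ := ContinuousLinearMap.le_opNorm _ _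
      _ = ‖x‖ * ‖ν‖ := by rw [mul_comm]; rfl
  set ιC : L →L[ℝ] StrongDual ℝ ↥V := LinearMap.mkContinuous ι 1 hιb with hιC
  set μ : StrongDual ℝ L := Ψ.comp ιC with hμdef
  have hμapp : ∀ x : L, μ x = Ψ (ι x) := by
    intro x; simp [hμdef, hιC]
  have hkey : ∀ u : ↥WG, φ₀ (G u) + Ψ (ι (u:L)) = f (u:L) := by
    intro u
    have h1 : g (J u) = f (u:L) := by
      have h2 := hg ⟨J u, LinearMap.mem_range_self J u⟩
      have h3 : F ⟨J u, LinearMap.mem_range_self J u⟩ = f (u:L) := by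
        rw [hF]
        rw [LinearMap.mkContinuous_apply]
        exact hF₀app u
      rw [← h3]
      exact h2
    have h2 : (J u : Lv × StrongDual ℝ ↥V) = (G u, 0) + (0, ι (u:L)) := by
      rw [hJapp, Prod.mk_add_mk, add_zero, zero_add]
    calc φ₀ (G u) + Ψ (ι (u:L)) = g (G u, 0) + g (0, ι (u:L)) := by
          simp [hφ₀, hΨ]
      _ = g ((G u, 0) + (0, ι (u:L))) := (map_add g _ _).symm
      _ = g (J u) := by rw [← h2]
      _ = f (u:L) := h1
  have hμV : μ ∈ V := by
    by_contra hout
    obtain ⟨Λ, t, hΛV, hΛμ⟩ := geometric_hahn_banach_closed_point V.convex hVclosed hout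
    have hΛ0 : ∀ ν ∈ V, Λ ν = 0 := by
      intro ν hν
      by_contra hne
      have h1 : Λ (((t+1)/(Λ ν)) • ν) < t := hΛV _ (V.smul_mem _ hν)
      rw [map_smul, smul_eq_mul, div_mul_cancel₀ _ hne] at h1
      linarith
    have ht0 : 0 < t := by
      have := hΛV 0 V.zero_mem
      simpa using this
    obtain ⟨x, hx⟩ := hreflL Λ
    have hιx : ι x = 0 := by
      ext ν
      rw [hιapp]
      have h4 := hΛ0 (ν : StrongDual ℝ L) ν.2
      rw [← hx, dual_def] at h4
      simpa using h4
    have hμx : μ x = 0 := by rw [hμapp, hιx, map_zero]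
    have h5 : Λ μ = μ x := by rw [← hx, dual_def]
    rw [h5, hμx] at hΛμ
    linarith
  refine ⟨-φ₀, f - μ, μ, ?_, hμV, by abel⟩
  intro u
  have h6 := hkey u
  have hμu : μ ((u : ↥WG) : L) = Ψ (ι ((u : ↥WG) : L)) := hμapp _
  simp only [ContinuousLinearMap.neg_apply, ContinuousLinearMap.sub_apply]
  linarith


theorem surjectivity_of_D_iff_norm_equivalence
    [CompleteSpace L] [CompleteSpace Lv]
    [TopologicalSpace.SeparableSpace L] [TopologicalSpace.SeparableSpace Lv]
    (hreflL : Function.Surjective ⇑(inclusionInDoubleDual ℝ L))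
    (hreflLv : Function.Surjective ⇑(inclusionInDoubleDual ℝ Lv))
    (WG : Submodule ℝ L) (hWGdense : Dense (WG : Set L))
    (G : ↥WG →ₗ[ℝ] Lv)
    (hGclosed : IsClosed (Set.range fun u : ↥WG => ((u : L), G u)))
    (p : ℝ) (hp : 1 < p)
    (p' : ℝ) (hpp' : 1 / p + 1 / p' = 1)
    (V : Submodule ℝ (StrongDual ℝ L)) (hVclosed : IsClosed (V : Set (StrongDual ℝ L))) :
    (∀ f : StrongDual ℝ L, ∃ (φ : StrongDual ℝ Lv) (w μ : StrongDual ℝ L),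
      IsWDpair WG G φ w ∧ μ ∈ V ∧ f = w + μ) ↔
    (∃ C : ℝ, 0 < C ∧ ∀ u : ↥WG,
      (‖(u : L)‖ ^ p + ‖G u‖ ^ p) ^ (1 / p) ≤
        C * (semV V (u : L) ^ p + ‖G u‖ ^ p) ^ (1 / p)) := by
  constructor
  · exact fun H => fwd_aux WG G p hp V H
  · rintro ⟨C, hC, h⟩
    exact bwd_aux hreflL WG G p hp V hVclosed C hC h
end
end

section
/- A sequence (𝒟_m)_{m∈ℕ} of gradient discretisations is consistent if and only if there exists a subset W̃_G of W_G, dense in W_G for the graph norm ‖·‖_{W_G,𝒢}, such that S_{𝒟_m}(ψ) → 0 as m → ∞ for every ψ ∈ W̃_G. -/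
open NormedSpace Filter Topology

noncomputable section

variable {L Lv : Type*} [NormedAddCommGroup L] [NormedSpace ℝ L]
  [NormedAddCommGroup Lv] [NormedSpace ℝ Lv]

lemma SDdef_nonneg' {V : Submodule ℝ (StrongDual ℝ L)} {p : ℝ} (D : GradDisc L Lv V p)
    (φ : L) (gφ : Lv) : 0 ≤ D.SDdef φ gφ := by
  apply Real.sInf_nonneg
  rintro x ⟨v, rfl⟩
  positivity

lemma SDdef_triangle {V : Submodule ℝ (StrongDual ℝ L)} {p : ℝ} (D : GradDisc L Lv V p)
    (u v : L) (gu gv : Lv) :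
    D.SDdef u gu ≤ D.SDdef v gv + (‖u - v‖ + ‖gu - gv‖) := by
  rw [GradDisc.SDdef, GradDisc.SDdef, ← sub_le_iff_le_add]
  apply le_csInf ⟨_, Set.mem_range_self (0 : D.X)⟩
  rintro b ⟨w, rfl⟩
  rw [sub_le_iff_le_add]
  have hbdd : BddBelow (Set.range fun w : D.X => ‖D.P w - u‖ + ‖D.Gd w - gu‖) := by
    refine ⟨0, ?_⟩; rintro x ⟨w', rfl⟩; positivity
  calc sInf (Set.range fun w : D.X => ‖D.P w - u‖ + ‖D.Gd w - gu‖)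
      ≤ ‖D.P w - u‖ + ‖D.Gd w - gu‖ := csInf_le hbdd ⟨w, rfl⟩
    _ ≤ ‖D.P w - v‖ + ‖D.Gd w - gv‖ + (‖u - v‖ + ‖gu - gv‖) := by
        have h1 : ‖D.P w - u‖ ≤ ‖D.P w - v‖ + ‖v - u‖ :=
          norm_sub_le_norm_sub_add_norm_sub _ _ _
        have h2 : ‖D.Gd w - gu‖ ≤ ‖D.Gd w - gv‖ + ‖gv - gu‖ :=
          norm_sub_le_norm_sub_add_norm_sub _ _ _
        rw [norm_sub_rev v u] at h1
        rw [norm_sub_rev gv gu] at h2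
        linarith

lemma left_le_rpow_aux {a b p : ℝ} (ha : 0 ≤ a) (hb : 0 ≤ b) (hp : 1 < p) :
    a ≤ (a ^ p + b ^ p) ^ (1 / p) := by
  have hp0 : 0 < p := lt_trans zero_lt_one hp
  have key : a = (a ^ p) ^ (1 / p) := by
    rw [← Real.rpow_mul ha, mul_one_div, div_self hp0.ne', Real.rpow_one]
  nth_rewrite 1 [key]
  exact Real.rpow_le_rpow (Real.rpow_nonneg ha p)
    (le_add_of_nonneg_right (Real.rpow_nonneg hb p)) (by positivity)

theorem consistent_iff_dense_subset
    [CompleteSpace L] [CompleteSpace Lv]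
    [TopologicalSpace.SeparableSpace L] [TopologicalSpace.SeparableSpace Lv]
    (hreflL : Function.Surjective ⇑(inclusionInDoubleDual ℝ L))
    (hreflLv : Function.Surjective ⇑(inclusionInDoubleDual ℝ Lv))
    (WG : Submodule ℝ L) (hWGdense : Dense (WG : Set L))
    (G : ↥WG →ₗ[ℝ] Lv)
    (hGclosed : IsClosed (Set.range fun u : ↥WG => ((u : L), G u)))
    (p : ℝ) (hp : 1 < p)
    (V : Submodule ℝ (StrongDual ℝ L)) (hVclosed : IsClosed (V : Set (StrongDual ℝ L)))
    (CWGV : ℝ) (hCWGV : 0 < CWGV)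
    (hequiv : ∀ u : ↥WG, (‖(u : L)‖ ^ p + ‖G u‖ ^ p) ^ (1 / p) ≤
      CWGV * (semV V (u : L) ^ p + ‖G u‖ ^ p) ^ (1 / p))
    (D : ℕ → GradDisc L Lv V p) :
    Consistent WG G D ↔
      ∃ Wt : Set ↥WG,
        (∀ u : ↥WG, ∀ ε : ℝ, 0 < ε → ∃ v ∈ Wt,
          (‖(u : L) - (v : L)‖ ^ p + ‖G u - G v‖ ^ p) ^ (1 / p) < ε) ∧
        (∀ v ∈ Wt, Tendsto (fun m => (D m).SDdef (v : L) (G v)) atTop (𝓝 0)) := by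
  have hp0 : 0 < p := lt_trans zero_lt_one hp
  constructor
  · intro hcons
    refine ⟨Set.univ, ?_, fun v _ => hcons v⟩
    intro u ε hε
    refine ⟨u, trivial, ?_⟩
    simp only [sub_self, norm_zero]
    rw [Real.zero_rpow hp0.ne', add_zero, Real.zero_rpow (one_div_ne_zero hp0.ne')]
    exact hε
  · rintro ⟨Wt, hdense, hconv⟩ u
    rw [Metric.tendsto_atTop]
    intro ε hε
    obtain ⟨v, hvWt, hv⟩ := hdense u (ε / 3) (by positivity)
    have ha : ‖(u : L) - (v : L)‖ < ε / 3 :=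
      lt_of_le_of_lt (left_le_rpow_aux (norm_nonneg _) (norm_nonneg _) hp) hv
    have hb : ‖G u - G v‖ < ε / 3 := by
      refine lt_of_le_of_lt ?_ hv
      rw [add_comm (‖(u : L) - (v : L)‖ ^ p)]
      exact left_le_rpow_aux (norm_nonneg _) (norm_nonneg _) hp
    obtain ⟨N, hN⟩ := (Metric.tendsto_atTop.mp (hconv v hvWt)) (ε / 3) (by positivity)
    refine ⟨N, fun n hn => ?_⟩
    have hSv : (D n).SDdef (v : L) (G v) < ε / 3 := by
      have := hN n hn
      rw [Real.dist_eq, sub_zero, abs_of_nonneg (SDdef_nonneg' _ _ _)] at this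
      exact this
    have hle := SDdef_triangle (D n) (u : L) (v : L) (G u) (G v)
    rw [Real.dist_eq, sub_zero, abs_of_nonneg (SDdef_nonneg' _ _ _)]
    linarith
end
end

section
/- If there exists a sequence of gradient discretisations that is both consistent and compact, then the embedding of W_G (equipped with the graph norm ‖·‖_{W_G,𝒢}) into L is compact: every sequence bounded in W_G for the graph norm admits a subsequence converging strongly in L. -/
open NormedSpace Filter Topology

noncomputable section

variable {L Lv : Type*} [NormedAddCommGroup L] [NormedSpace ℝ L]
  [NormedAddCommGroup Lv] [NormedSpace ℝ Lv]

lemma semV_le_norm (V : Submodule ℝ (StrongDual ℝ L)) (u : L) : semV V u ≤ ‖u‖ := by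
  apply Real.sSup_le _ (norm_nonneg u)
  rintro x ⟨μ, ⟨-, hμ⟩, rfl⟩
  rw [div_le_iff₀ (norm_pos_iff.2 hμ)]
  calc |μ u| = ‖μ u‖ := rfl
    _ ≤ ‖μ‖ * ‖u‖ := μ.le_opNorm u
    _ = ‖u‖ * ‖μ‖ := mul_comm _ _

lemma le_graph_aux {p : ℝ} (hp : 0 < p) {a : ℝ} (b : ℝ) (ha : 0 ≤ a) (hb : 0 ≤ b) :
    a ≤ (a ^ p + b ^ p) ^ (1 / p) := by
  have h1 : a = (a ^ p) ^ (1 / p) := by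
    rw [← Real.rpow_mul ha, mul_one_div, div_self hp.ne', Real.rpow_one]
  nth_rewrite 1 [h1]
  apply Real.rpow_le_rpow (Real.rpow_nonneg ha p)
    (le_add_of_nonneg_right (Real.rpow_nonneg hb p)) (by positivity)

lemma GradDisc.dnorm_zero {V : Submodule ℝ (StrongDual ℝ L)} {p : ℝ} (hp : 0 < p)
    (D : GradDisc L Lv V p) : D.dnorm 0 = 0 := by
  have h0 : semV V (0 : L) = 0 :=
    le_antisymm (by simpa using semV_le_norm V (0 : L)) (semV_nonneg _ _)
  simp [GradDisc.dnorm, h0, map_zero, Real.zero_rpow hp.ne',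
    Real.zero_rpow (inv_ne_zero hp.ne'), Real.zero_rpow (one_div_ne_zero hp.ne')]

/-- Transport of a discrete element along an equality of indices. -/
def castX {V : Submodule ℝ (StrongDual ℝ L)} {p : ℝ} (D : ℕ → GradDisc L Lv V p)
    {j k : ℕ} (h : j = k) (x : (D j).X) : (D k).X := h ▸ x

lemma castX_P {V : Submodule ℝ (StrongDual ℝ L)} {p : ℝ} (D : ℕ → GradDisc L Lv V p)
    {j k : ℕ} (h : j = k) (x : (D j).X) : (D k).P (castX D h x) = (D j).P x := by
  subst h; rfl

lemma castX_dnorm {V : Submodule ℝ (StrongDual ℝ L)} {p : ℝ} (D : ℕ → GradDisc L Lv V p)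
    {j k : ℕ} (h : j = k) (x : (D j).X) : (D k).dnorm (castX D h x) = (D j).dnorm x := by
  subst h; rfl

theorem compact_consistent_GDs_implies_compact_embedding
    [CompleteSpace L] [CompleteSpace Lv]
    [TopologicalSpace.SeparableSpace L] [TopologicalSpace.SeparableSpace Lv]
    (hreflL : Function.Surjective ⇑(inclusionInDoubleDual ℝ L))
    (hreflLv : Function.Surjective ⇑(inclusionInDoubleDual ℝ Lv))
    (WG : Submodule ℝ L) (hWGdense : Dense (WG : Set L))
    (G : ↥WG →ₗ[ℝ] Lv)
    (hGclosed : IsClosed (Set.range fun u : ↥WG => ((u : L), G u)))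
    (p : ℝ) (hp : 1 < p)
    (V : Submodule ℝ (StrongDual ℝ L)) (hVclosed : IsClosed (V : Set (StrongDual ℝ L)))
    (CWGV : ℝ) (hCWGV : 0 < CWGV)
    (hequiv : ∀ u : ↥WG, (‖(u : L)‖ ^ p + ‖G u‖ ^ p) ^ (1 / p) ≤
      CWGV * (semV V (u : L) ^ p + ‖G u‖ ^ p) ^ (1 / p))
    (hex : ∃ D : ℕ → GradDisc L Lv V p, Consistent WG G D ∧ CompactSeq D) :
    ∀ u : ℕ → ↥WG,
      (∃ C : ℝ, ∀ n : ℕ, (‖(u n : L)‖ ^ p + ‖G (u n)‖ ^ p) ^ (1 / p) ≤ C) →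
      ∃ φ : ℕ → ℕ, StrictMono φ ∧ ∃ l : L,
        Tendsto (fun k => ((u (φ k) : L))) atTop (𝓝 l) := by
  classical
  obtain ⟨D, hcons, hcomp⟩ := hex
  intro u ⟨C, hC⟩
  have hp0 : 0 < p := lt_trans one_pos hp
  have hC0 : 0 ≤ C := le_trans (Real.rpow_nonneg (by positivity) _) (hC 0)
  -- bounds on ‖u n‖ and ‖G (u n)‖
  have hun : ∀ n, ‖(u n : L)‖ ≤ C := fun n =>
    le_trans (le_graph_aux hp0 _ (norm_nonneg _) (norm_nonneg _)) (hC n)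
  have hGn : ∀ n, ‖G (u n)‖ ≤ C := by
    intro n
    refine le_trans ?_ (hC n)
    rw [add_comm]
    exact le_graph_aux hp0 _ (norm_nonneg _) (norm_nonneg _)
  -- choose indices m n with small consistency error
  have hM : ∀ n : ℕ, ∃ N : ℕ, ∀ m ≥ N,
      (D m).SDdef ((u n : L)) (G (u n)) < 1 / (n + 1) := by
    intro n
    have hpos : (0 : ℝ) < 1 / (n + 1) := by positivity
    exact (((hcons (u n)).eventually (gt_mem_nhds hpos)).and (Eventually.of_forall
      fun _ => trivial)).exists_forall_of_atTop  |>.imp fun N hN m hm => (hN m hm).1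
  choose M hMspec using hM
  set m : ℕ → ℕ := fun n => Nat.rec (M 0) (fun n ih => max (M (n + 1)) (ih + 1)) n with hm_def
  have hm_mono : StrictMono m := by
    apply strictMono_nat_of_lt_succ
    intro n
    exact lt_of_lt_of_le (Nat.lt_succ_self _) (le_max_right _ _)
  have hmM : ∀ n, M n ≤ m n := by
    intro n
    cases n with
    | zero => exact le_refl _
    | succ k => exact le_max_left _ _
  have hSm : ∀ n, (D (m n)).SDdef ((u n : L)) (G (u n)) < 1 / (n + 1) :=
    fun n => hMspec n (m n) (hmM n)
  -- choose near-optimal discrete elements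
  have hv : ∀ n : ℕ, ∃ v : (D (m n)).X,
      ‖(D (m n)).P v - (u n : L)‖ + ‖(D (m n)).Gd v - G (u n)‖ < 2 / (n + 1) := by
    intro n
    have hne : (Set.range fun v : (D (m n)).X =>
        ‖(D (m n)).P v - (u n : L)‖ + ‖(D (m n)).Gd v - G (u n)‖).Nonempty :=
      Set.range_nonempty _
    have hpos : (0 : ℝ) < 1 / (n + 1) := by positivity
    obtain ⟨a, ⟨v, rfl⟩, ha⟩ := Real.lt_sInf_add_pos hne hpos
    refine ⟨v, lt_of_lt_of_le (lt_trans ha (add_lt_add_left (hSm n) _)) ?_⟩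
    rw [← add_div]
    norm_num
  choose v hvspec using hv
  -- bound on the discrete norms
  set C' : ℝ := (2 * (C + 2) ^ p) ^ (1 / p) with hC'def
  have hdb : ∀ n, (D (m n)).dnorm (v n) ≤ C' := by
    intro n
    have h2n : (2 : ℝ) / (n + 1) ≤ 2 := by
      rw [div_le_iff₀ (by positivity)]
      nlinarith [Nat.cast_nonneg (α := ℝ) n]
    have hPb : ‖(D (m n)).P (v n)‖ ≤ C + 2 := by
      calc ‖(D (m n)).P (v n)‖
          = ‖((D (m n)).P (v n) - (u n : L)) + (u n : L)‖ := by rw [sub_add_cancel]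
        _ ≤ ‖(D (m n)).P (v n) - (u n : L)‖ + ‖(u n : L)‖ := norm_add_le _ _
        _ ≤ 2 / (n + 1) + C := by
            have := (hvspec n).le
            have h1 : ‖(D (m n)).P (v n) - (u n : L)‖ ≤ 2 / (n + 1) := by
              nlinarith [norm_nonneg ((D (m n)).Gd (v n) - G (u n)), hvspec n]
            linarith [hun n]
        _ ≤ C + 2 := by linarith
    have hGb : ‖(D (m n)).Gd (v n)‖ ≤ C + 2 := by
      calc ‖(D (m n)).Gd (v n)‖
          = ‖((D (m n)).Gd (v n) - G (u n)) + G (u n)‖ := by rw [sub_add_cancel]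
        _ ≤ ‖(D (m n)).Gd (v n) - G (u n)‖ + ‖G (u n)‖ := norm_add_le _ _
        _ ≤ 2 / (n + 1) + C := by
            have h1 : ‖(D (m n)).Gd (v n) - G (u n)‖ ≤ 2 / (n + 1) := by
              nlinarith [norm_nonneg ((D (m n)).P (v n) - (u n : L)), hvspec n]
            linarith [hGn n]
        _ ≤ C + 2 := by linarith
    have hsV : semV V ((D (m n)).P (v n)) ≤ C + 2 := le_trans (semV_le_norm _ _) hPb
    have h1 : semV V ((D (m n)).P (v n)) ^ p ≤ (C + 2) ^ p :=
      Real.rpow_le_rpow (semV_nonneg _ _) hsV hp0.le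
    have h2 : ‖(D (m n)).Gd (v n)‖ ^ p ≤ (C + 2) ^ p :=
      Real.rpow_le_rpow (norm_nonneg _) hGb hp0.le
    have hsum : semV V ((D (m n)).P (v n)) ^ p + ‖(D (m n)).Gd (v n)‖ ^ p
        ≤ 2 * (C + 2) ^ p := by linarith
    exact Real.rpow_le_rpow (add_nonneg (Real.rpow_nonneg (semV_nonneg _ _) _)
      (Real.rpow_nonneg (norm_nonneg _) _)) hsum (by positivity)
  have hC'0 : 0 ≤ C' := Real.rpow_nonneg (by positivity) _
  -- assemble a full discrete sequence
  set w : (k : ℕ) → (D k).X := fun k =>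
    if h : ∃ n, m n = k then castX D h.choose_spec (v h.choose) else 0 with hw_def
  have hwP : ∀ n, (D (m n)).P (w (m n)) = (D (m n)).P (v n) := by
    intro n
    have h : ∃ n', m n' = m n := ⟨n, rfl⟩
    have he : h.choose = n := hm_mono.injective h.choose_spec
    simp only [hw_def, dif_pos h, castX_P]
    rw [show ∀ n', n' = n → (D (m n')).P (v n') = (D (m n)).P (v n)
      from fun n' hn' => by subst hn'; rfl]
    exact he
  have hwd : ∀ k, (D k).dnorm (w k) ≤ C' := by
    intro k
    simp only [hw_def]
    split
    · next h =>
      rw [castX_dnorm]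
      exact hdb h.choose
    · rw [GradDisc.dnorm_zero hp0]
      exact hC'0
  have hcpt := hcomp w ⟨C', hwd⟩
  set y : ℕ → L := fun n => (D (m n)).P (v n) with hy_def
  have hymem : ∀ n, y n ∈ closure (Set.range fun k => (D k).P (w k)) :=
    fun n => subset_closure ⟨m n, hwP n⟩
  obtain ⟨l, -, φ, hφ, hlim⟩ := hcpt.tendsto_subseq hymem
  refine ⟨φ, hφ, l, ?_⟩
  have hgtend : Tendsto (fun k : ℕ => 2 / ((k : ℝ) + 1)) atTop (𝓝 0) := by
    have h2 : Tendsto (fun k : ℕ => ((k : ℝ) + 1)) atTop atTop :=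
      tendsto_atTop_add_const_right _ 1 tendsto_natCast_atTop_atTop
    exact Tendsto.div_atTop tendsto_const_nhds h2
  have hbound : ∀ k, ‖(u (φ k) : L) - y (φ k)‖ ≤ 2 / ((k : ℝ) + 1) := by
    intro k
    have h1 : ‖(u (φ k) : L) - y (φ k)‖ ≤ 2 / (φ k + 1) := by
      rw [norm_sub_rev]
      have := hvspec (φ k)
      nlinarith [norm_nonneg ((D (m (φ k))).Gd (v (φ k)) - G (u (φ k)))]
    refine le_trans h1 ?_
    have hk : (k : ℝ) ≤ φ k := by exact_mod_cast hφ.le_apply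
    gcongr
  have hdiff : Tendsto (fun k => (u (φ k) : L) - y (φ k)) atTop (𝓝 0) :=
    squeeze_zero_norm hbound hgtend
  have := hdiff.add hlim
  simp only [Function.comp] at this
  simpa using this
end
end
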